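/- Let q ∈ (0,1], let n be a nonnegative integer, let real coefficients b^n_{ijk} be given for all nonnegative i, j, k with i + j + k = n, and let γ^n(u,v) = Σ_{i+j+k=n} b^n_{ijk} B^n_{ijk}(u,v). Define recursively, for 0 ≤ r ≤ n and all nonnegative i, j, k with i + j + k = n − r: f^{(0)}_{ijk} = b^n_{ijk} and f^{(r)}_{ijk} = q^k u · f^{(r−1)}_{i+1,j,k} + q^k v · f^{(r−1)}_{i,j+1,k} + (1 − q^k u − q^k v) · f^{(r−1)}_{i,j,k+1}. Then for every r with 0 ≤ r ≤ n and all real u, v, γ^n(u,v) = Σ_{i+j+k=n−r} f^{(r)}_{ijk} B^{n−r}_{ijk}(u,v). -/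

import Mathlib

open Finset

/-- The q-integer [r] = 1 + q + ... + q^(r-1). -/
noncomputable def qInt (q : ℝ) (r : ℕ) : ℝ := ∑ s ∈ Finset.range r, q ^ s

/-- The q-factorial [r]!. -/
noncomputable def qFact (q : ℝ) : ℕ → ℝ
  | 0 => 1
  | r + 1 => qInt q (r + 1) * qFact q r

/-- The q-binomial coefficient [i choose j]_q (zero unless i ≥ j ≥ 0). -/
noncomputable def qBinom (q : ℝ) (i j : ℕ) : ℝ :=
  if j ≤ i then qFact q i / (qFact q j * qFact q (i - j)) else 0

/-- The q-binomial coefficient with integer indices, zero unless i ≥ j ≥ 0. -/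
noncomputable def qBinomZ (q : ℝ) (i j : ℤ) : ℝ :=
  if 0 ≤ j ∧ j ≤ i then qFact q i.toNat / (qFact q j.toNat * qFact q (i - j).toNat) else 0

/-- The triangular q-Bernstein polynomial B^n_{ijk}(u,v)
    (meaningful for i + j + k = n). -/
noncomputable def triB (q : ℝ) (n i j k : ℕ) (u v : ℝ) : ℝ :=
  qBinom q n k * (Nat.choose (i + j) i : ℝ) * u ^ i * v ^ j *
    ∏ s ∈ Finset.range k, (1 - q ^ s * u - q ^ s * v)

/-- The triangular q-Bernstein polynomial with integer indices; by convention it is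
    zero whenever any of the indices is negative. -/
noncomputable def triBZ (q : ℝ) (n : ℕ) (i j k : ℤ) (u v : ℝ) : ℝ :=
  if 0 ≤ i ∧ 0 ≤ j ∧ 0 ≤ k then triB q n i.toNat j.toNat k.toNat u v else 0

/-- The classical triangular Bernstein polynomial b^n_{ijk}(u,v). -/
noncomputable def triBern (n i j k : ℕ) (u v : ℝ) : ℝ :=
  (Nat.factorial n : ℝ) /
      ((Nat.factorial i : ℝ) * (Nat.factorial j : ℝ) * (Nat.factorial k : ℝ)) *
    u ^ i * v ^ j * (1 - u - v) ^ k

/-- The set of triples (i, j, k) of nonnegative integers with i + j + k = n. -/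
def simplex (n : ℕ) : Finset (ℕ × ℕ × ℕ) :=
  (Finset.range (n + 1) ×ˢ Finset.range (n + 1) ×ˢ Finset.range (n + 1)).filter
    (fun p => p.1 + p.2.1 + p.2.2 = n)

lemma mem_simplex {n : ℕ} {p : ℕ × ℕ × ℕ} : p ∈ simplex n ↔ p.1 + p.2.1 + p.2.2 = n := by
  simp only [simplex, Finset.mem_filter, Finset.mem_product, Finset.mem_range]
  omega

lemma qInt_pos {q : ℝ} (hq0 : 0 < q) {r : ℕ} (hr : 1 ≤ r) : 0 < qInt q r := by
  unfold qInt
  apply Finset.sum_pos (fun s _ => pow_pos hq0 s)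
  exact Finset.nonempty_range_iff.mpr (by omega)

lemma qFact_pos {q : ℝ} (hq0 : 0 < q) (r : ℕ) : 0 < qFact q r := by
  induction r with
  | zero => norm_num [qFact]
  | succ m ih => exact mul_pos (qInt_pos hq0 (by omega)) ih

lemma qInt_add (q : ℝ) (a b : ℕ) : qInt q (a + b) = qInt q a + q ^ a * qInt q b := by
  unfold qInt
  rw [Finset.sum_range_add, Finset.mul_sum]
  simp [pow_add]

lemma qFact_succ (q : ℝ) (r : ℕ) : qFact q (r + 1) = qInt q (r + 1) * qFact q r := by
  simp [qFact]

lemma qBinom_zero {q : ℝ} (hq0 : 0 < q) (i : ℕ) : qBinom q i 0 = 1 := by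
  simp only [qBinom, Nat.zero_le, if_pos, Nat.sub_zero, qFact, one_mul]
  exact div_self (qFact_pos hq0 i).ne'

lemma qPascal {q : ℝ} (hq0 : 0 < q) (m k : ℕ) :
    qBinom q (m + 1) k = q ^ k * qBinom q m k + (if 1 ≤ k then qBinom q m (k - 1) else 0) := by
  rcases Nat.eq_zero_or_pos k with hk | hk
  · subst hk; simp [qBinom_zero hq0]
  rcases le_or_gt k m with hkm | hkm
  · -- 1 ≤ k ≤ m
    obtain ⟨k', rfl⟩ : ∃ k', k = k' + 1 := ⟨k - 1, by omega⟩
    obtain ⟨d, rfl⟩ : ∃ d, m = k' + 1 + d := ⟨m - (k' + 1), by omega⟩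
    have h1 : qInt q (k' + 1 + d + 1) = qInt q (k' + 1) + q ^ (k' + 1) * qInt q (d + 1) := by
      rw [← qInt_add, Nat.add_assoc]
    simp only [qBinom, if_pos (by omega : k' + 1 ≤ k' + 1 + d + 1),
      if_pos (by omega : k' + 1 ≤ k' + 1 + d), if_pos (by omega : 1 ≤ k' + 1),
      if_pos (by omega : k' + 1 - 1 ≤ k' + 1 + d),
      show k' + 1 + d + 1 - (k' + 1) = d + 1 from by omega,
      show k' + 1 + d - (k' + 1) = d from by omega,
      show k' + 1 - 1 = k' from by omega,
      show k' + 1 + d - k' = d + 1 from by omega,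
      if_pos (show k' ≤ k' + 1 + d from by omega)]
    rw [qFact_succ q (k' + 1 + d), qFact_succ q k', qFact_succ q d, h1]
    have hK := (qFact_pos hq0 k').ne'
    have hM := (qFact_pos hq0 (k' + 1 + d)).ne'
    have hD := (qFact_pos hq0 d).ne'
    have hIk := (qInt_pos hq0 (by omega : 1 ≤ k' + 1)).ne'
    have hId := (qInt_pos hq0 (by omega : 1 ≤ d + 1)).ne'
    field_simp
    ring
  · rcases eq_or_lt_of_le (by omega : m + 1 ≤ k) with hk1 | hk1
    · subst hk1
      simp only [qBinom, le_refl, if_pos, if_pos hk, Nat.sub_self,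
        if_neg (by omega : ¬ m + 1 ≤ m), if_pos (by omega : m + 1 - 1 ≤ m)]
      rw [show m + 1 - 1 = m by omega, Nat.sub_self, qFact_succ]
      have hM := qFact_pos hq0 m
      have hI := qInt_pos hq0 (by omega : 1 ≤ m + 1)
      rw [show qFact q 0 = 1 from rfl, if_pos (show 1 ≤ m + 1 from by omega)]
      field_simp
      simp
    · simp only [qBinom, if_neg (by omega : ¬ k ≤ m + 1), if_neg (by omega : ¬ k ≤ m),
        if_pos hk, if_neg (by omega : ¬ k - 1 ≤ m)]
      simp

lemma sum_shift1 (m : ℕ) (F : ℕ × ℕ × ℕ → ℝ) :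
    ∑ p ∈ simplex m, F (p.1 + 1, p.2.1, p.2.2) =
      ∑ p ∈ simplex (m + 1), if 1 ≤ p.1 then F p else 0 := by
  rw [← Finset.sum_filter]
  refine Finset.sum_nbij' (fun p => (p.1 + 1, p.2.1, p.2.2)) (fun p => (p.1 - 1, p.2.1, p.2.2))
    ?_ ?_ ?_ ?_ ?_
  · intro a ha; simp only [mem_simplex, Finset.mem_filter] at *; omega
  · intro a ha; simp only [mem_simplex, Finset.mem_filter] at *; omega
  · intro a ha; simp
  · intro a ha
    simp only [mem_simplex, Finset.mem_filter] at ha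
    ext <;> simp <;> omega
  · intro a ha; rfl

lemma sum_shift2 (m : ℕ) (F : ℕ × ℕ × ℕ → ℝ) :
    ∑ p ∈ simplex m, F (p.1, p.2.1 + 1, p.2.2) =
      ∑ p ∈ simplex (m + 1), if 1 ≤ p.2.1 then F p else 0 := by
  rw [← Finset.sum_filter]
  refine Finset.sum_nbij' (fun p => (p.1, p.2.1 + 1, p.2.2)) (fun p => (p.1, p.2.1 - 1, p.2.2))
    ?_ ?_ ?_ ?_ ?_
  · intro a ha; simp only [mem_simplex, Finset.mem_filter] at *; omega
  · intro a ha; simp only [mem_simplex, Finset.mem_filter] at *; omega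
  · intro a ha; simp
  · intro a ha
    simp only [mem_simplex, Finset.mem_filter] at ha
    ext <;> simp <;> omega
  · intro a ha; rfl

lemma sum_shift3 (m : ℕ) (F : ℕ × ℕ × ℕ → ℝ) :
    ∑ p ∈ simplex m, F (p.1, p.2.1, p.2.2 + 1) =
      ∑ p ∈ simplex (m + 1), if 1 ≤ p.2.2 then F p else 0 := by
  rw [← Finset.sum_filter]
  refine Finset.sum_nbij' (fun p => (p.1, p.2.1, p.2.2 + 1)) (fun p => (p.1, p.2.1, p.2.2 - 1))
    ?_ ?_ ?_ ?_ ?_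
  · intro a ha; simp only [mem_simplex, Finset.mem_filter] at *; omega
  · intro a ha; simp only [mem_simplex, Finset.mem_filter] at *; omega
  · intro a ha; simp
  · intro a ha
    simp only [mem_simplex, Finset.mem_filter] at ha
    ext <;> simp <;> omega
  · intro a ha; rfl

lemma triB_rec {q : ℝ} (hq0 : 0 < q) (m i j k : ℕ) (h : i + j + k = m + 1) (u v : ℝ) :
    triB q (m + 1) i j k u v =
      (if 1 ≤ i then q ^ k * u * triB q m (i - 1) j k u v else 0) +
      (if 1 ≤ j then q ^ k * v * triB q m i (j - 1) k u v else 0) +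
      (if 1 ≤ k then (1 - q ^ (k - 1) * u - q ^ (k - 1) * v) * triB q m i j (k - 1) u v
        else 0) := by
  have key : q ^ k * qBinom q m k * (Nat.choose (i + j) i : ℝ) * u ^ i * v ^ j *
        ∏ s ∈ Finset.range k, (1 - q ^ s * u - q ^ s * v) =
      (if 1 ≤ i then q ^ k * u * triB q m (i - 1) j k u v else 0) +
      (if 1 ≤ j then q ^ k * v * triB q m i (j - 1) k u v else 0) := by
    rcases Nat.eq_zero_or_pos i with hi | hi
    · subst hi
      rcases Nat.eq_zero_or_pos j with hj | hj
      · subst hj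
        have hk : k = m + 1 := by omega
        subst hk
        have : qBinom q m (m + 1) = 0 := by
          simp [qBinom, if_neg (by omega : ¬ m + 1 ≤ m)]
        simp [this]
      · obtain ⟨j', rfl⟩ : ∃ j', j = j' + 1 := ⟨j - 1, by omega⟩
        simp only [if_neg (by omega : ¬ 1 ≤ 0), if_pos (by omega : 1 ≤ j' + 1), triB,
          Nat.add_sub_cancel, Nat.zero_add, Nat.choose_zero_right]
        push_cast
        ring
    · obtain ⟨i', rfl⟩ : ∃ i', i = i' + 1 := ⟨i - 1, by omega⟩
      rcases Nat.eq_zero_or_pos j with hj | hj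
      · subst hj
        simp only [if_neg (by omega : ¬ 1 ≤ 0), if_pos (by omega : 1 ≤ i' + 1), triB,
          Nat.add_sub_cancel, Nat.add_zero, Nat.choose_self]
        push_cast
        ring
      · obtain ⟨j', rfl⟩ : ∃ j', j = j' + 1 := ⟨j - 1, by omega⟩
        simp only [if_pos (by omega : 1 ≤ i' + 1), if_pos (by omega : 1 ≤ j' + 1), triB,
          Nat.add_sub_cancel]
        have hc : Nat.choose (i' + 1 + (j' + 1)) (i' + 1) =
            Nat.choose (i' + (j' + 1)) i' + Nat.choose (i' + 1 + j') (i' + 1) := by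
          rw [show i' + 1 + (j' + 1) = (i' + (j' + 1)) + 1 by omega, Nat.choose_succ_succ]
          congr 2
          omega
        rw [hc]
        push_cast
        ring
  have key3 : (if 1 ≤ k then qBinom q m (k - 1) else 0) * (Nat.choose (i + j) i : ℝ) *
        u ^ i * v ^ j * ∏ s ∈ Finset.range k, (1 - q ^ s * u - q ^ s * v) =
      (if 1 ≤ k then (1 - q ^ (k - 1) * u - q ^ (k - 1) * v) * triB q m i j (k - 1) u v
        else 0) := by
    rcases Nat.eq_zero_or_pos k with hk | hk
    · subst hk; simp
    · obtain ⟨k', rfl⟩ : ∃ k', k = k' + 1 := ⟨k - 1, by omega⟩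
      simp only [if_pos (by omega : 1 ≤ k' + 1), Nat.add_sub_cancel, triB,
        Finset.prod_range_succ]
      ring
  calc triB q (m + 1) i j k u v
      = q ^ k * qBinom q m k * (Nat.choose (i + j) i : ℝ) * u ^ i * v ^ j *
          ∏ s ∈ Finset.range k, (1 - q ^ s * u - q ^ s * v) +
        (if 1 ≤ k then qBinom q m (k - 1) else 0) * (Nat.choose (i + j) i : ℝ) *
          u ^ i * v ^ j * ∏ s ∈ Finset.range k, (1 - q ^ s * u - q ^ s * v) := by
        rw [triB, qPascal hq0]; ring
    _ = _ := by rw [key, key3]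

lemma step {q : ℝ} (hq0 : 0 < q) (u v : ℝ) (m : ℕ) (g G : ℕ → ℕ → ℕ → ℝ)
    (hG : ∀ i j k, i + j + k = m → G i j k =
      q ^ k * u * g (i + 1) j k + q ^ k * v * g i (j + 1) k +
        (1 - q ^ k * u - q ^ k * v) * g i j (k + 1)) :
    ∑ p ∈ simplex (m + 1), g p.1 p.2.1 p.2.2 * triB q (m + 1) p.1 p.2.1 p.2.2 u v =
      ∑ p ∈ simplex m, G p.1 p.2.1 p.2.2 * triB q m p.1 p.2.1 p.2.2 u v := by
  set F1 : ℕ × ℕ × ℕ → ℝ := fun p =>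
    if 1 ≤ p.1 then q ^ p.2.2 * u * g p.1 p.2.1 p.2.2 * triB q m (p.1 - 1) p.2.1 p.2.2 u v
    else 0 with hF1
  set F2 : ℕ × ℕ × ℕ → ℝ := fun p =>
    if 1 ≤ p.2.1 then q ^ p.2.2 * v * g p.1 p.2.1 p.2.2 * triB q m p.1 (p.2.1 - 1) p.2.2 u v
    else 0 with hF2
  set F3 : ℕ × ℕ × ℕ → ℝ := fun p =>
    if 1 ≤ p.2.2 then
      (1 - q ^ (p.2.2 - 1) * u - q ^ (p.2.2 - 1) * v) * g p.1 p.2.1 p.2.2 *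
        triB q m p.1 p.2.1 (p.2.2 - 1) u v
    else 0 with hF3
  calc ∑ p ∈ simplex (m + 1), g p.1 p.2.1 p.2.2 * triB q (m + 1) p.1 p.2.1 p.2.2 u v
      = ∑ p ∈ simplex (m + 1), (F1 p + F2 p + F3 p) := by
        refine Finset.sum_congr rfl fun p hp => ?_
        rw [mem_simplex] at hp
        rw [triB_rec hq0 m p.1 p.2.1 p.2.2 hp u v, hF1, hF2, hF3]
        simp only [mul_add, mul_ite, mul_zero]
        split_ifs <;> ring_nf
    _ = (∑ p ∈ simplex (m + 1), F1 p) + (∑ p ∈ simplex (m + 1), F2 p) +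
          (∑ p ∈ simplex (m + 1), F3 p) := by
        rw [Finset.sum_add_distrib, Finset.sum_add_distrib]
    _ = (∑ p ∈ simplex m, q ^ p.2.2 * u * g (p.1 + 1) p.2.1 p.2.2 *
            triB q m p.1 p.2.1 p.2.2 u v) +
        (∑ p ∈ simplex m, q ^ p.2.2 * v * g p.1 (p.2.1 + 1) p.2.2 *
            triB q m p.1 p.2.1 p.2.2 u v) +
        (∑ p ∈ simplex m, (1 - q ^ p.2.2 * u - q ^ p.2.2 * v) * g p.1 p.2.1 (p.2.2 + 1) *
            triB q m p.1 p.2.1 p.2.2 u v) := by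
        congr 1
        congr 1
        · calc ∑ p ∈ simplex (m + 1), F1 p
              = ∑ p ∈ simplex (m + 1), (if 1 ≤ p.1 then F1 p else 0) := by
                refine Finset.sum_congr rfl fun p hp => ?_
                rw [hF1]
                by_cases h : 1 ≤ p.1 <;> simp [h]
            _ = ∑ p ∈ simplex m, F1 (p.1 + 1, p.2.1, p.2.2) := (sum_shift1 m F1).symm
            _ = _ := by
                refine Finset.sum_congr rfl fun p hp => ?_
                rw [hF1]
                simp
        · calc ∑ p ∈ simplex (m + 1), F2 p
              = ∑ p ∈ simplex (m + 1), (if 1 ≤ p.2.1 then F2 p else 0) := by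
                refine Finset.sum_congr rfl fun p hp => ?_
                rw [hF2]
                by_cases h : 1 ≤ p.2.1 <;> simp [h]
            _ = ∑ p ∈ simplex m, F2 (p.1, p.2.1 + 1, p.2.2) := (sum_shift2 m F2).symm
            _ = _ := by
                refine Finset.sum_congr rfl fun p hp => ?_
                rw [hF2]
                simp
        · calc ∑ p ∈ simplex (m + 1), F3 p
              = ∑ p ∈ simplex (m + 1), (if 1 ≤ p.2.2 then F3 p else 0) := by
                refine Finset.sum_congr rfl fun p hp => ?_
                rw [hF3]
                by_cases h : 1 ≤ p.2.2 <;> simp [h]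
            _ = ∑ p ∈ simplex m, F3 (p.1, p.2.1, p.2.2 + 1) := (sum_shift3 m F3).symm
            _ = _ := by
                refine Finset.sum_congr rfl fun p hp => ?_
                rw [hF3]
                simp
    _ = ∑ p ∈ simplex m, G p.1 p.2.1 p.2.2 * triB q m p.1 p.2.1 p.2.2 u v := by
        rw [← Finset.sum_add_distrib, ← Finset.sum_add_distrib]
        refine Finset.sum_congr rfl fun p hp => ?_
        rw [mem_simplex] at hp
        rw [hG p.1 p.2.1 p.2.2 hp]
        ring

/-- intermediate quantities of the de Casteljau type algorithm. -/
theorem stmt3 (q : ℝ) (hq0 : 0 < q) (hq1 : q ≤ 1) (n : ℕ)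
    (b : ℕ → ℕ → ℕ → ℝ) (u v : ℝ)
    (f : ℕ → ℕ → ℕ → ℕ → ℝ)
    (hf0 : ∀ i j k, i + j + k = n → f 0 i j k = b i j k)
    (hfr : ∀ r i j k, r < n → i + j + k = n - (r + 1) →
      f (r + 1) i j k =
        q ^ k * u * f r (i + 1) j k + q ^ k * v * f r i (j + 1) k +
          (1 - q ^ k * u - q ^ k * v) * f r i j (k + 1)) :
    ∀ r ≤ n,
      ∑ p ∈ simplex n, b p.1 p.2.1 p.2.2 * triB q n p.1 p.2.1 p.2.2 u v =
        ∑ p ∈ simplex (n - r), f r p.1 p.2.1 p.2.2 * triB q (n - r) p.1 p.2.1 p.2.2 u v := by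
  intro r
  induction r with
  | zero =>
    intro _
    simp only [Nat.sub_zero]
    refine Finset.sum_congr rfl fun p hp => ?_
    rw [mem_simplex] at hp
    rw [hf0 p.1 p.2.1 p.2.2 hp]
  | succ r ih =>
    intro hr
    have hrn : r < n := by omega
    rw [ih (le_of_lt hrn)]
    have hm : n - r = (n - (r + 1)) + 1 := by omega
    rw [hm]
    exact step hq0 u v (n - (r + 1)) (f r) (f (r + 1))
      (fun i j k h => hfr r i j k hrn h)
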